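/- Let X be a compact metric space with Borel σ-algebra B, μ a Borel probability measure on X, and G a measurable partition of X. Then the set Δ_G = {(x,y) ∈ X×X : y ∈ G(x)}, where G(x) is the atom of G containing x, belongs to the product σ-algebra B⊗B, and the relatively independent square μ⊠_G μ is concentrated on Δ_G, i.e., μ⊠_G μ(Δ_G) = 1. -/

import Mathlib

open MeasureTheory Filter Topology Set
open scoped symmDiff Classical ENNReal NNReal

section Defs

variable {X : Type*}

/-- The pair `(x, y)` is (positively) asymptotic for `T`. -/
def IsAsymptoticPair [PseudoMetricSpace X] (T : X → X) (x y : X) : Prop :=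
  Tendsto (fun n : ℕ => dist (T^[n] x) (T^[n] y)) atTop (𝓝 0)

/-- Shannon entropy of the finite measurable partition of `X` given by the fibers of a
map `p` into a finite type. -/
noncomputable def partEntropy [MeasurableSpace X] (μ : Measure X) {ι : Type*} [Fintype ι]
    (p : X → ι) : ℝ :=
  ∑ i : ι, Real.negMulLog (μ (p ⁻¹' {i})).toReal

/-- Conditional Shannon entropy `H(P | F)` of the finite partition given by the fibers
of `p` with respect to the sub-σ-algebra `F`:
`H(P|F) = ∑_{A ∈ P} ∫ -E(1_A|F) log E(1_A|F) dμ`. -/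
noncomputable def condPartEntropy [MeasurableSpace X] (μ : Measure X)
    (F : MeasurableSpace X) {ι : Type*} [Fintype ι] (p : X → ι) : ℝ :=
  ∑ i : ι, ∫ x, Real.negMulLog ((μ[(p ⁻¹' {i}).indicator (fun _ => (1 : ℝ)) | F]) x) ∂μ

/-- The σ-algebra `σ(P^-)` generated by the partitions `T^{-n}P`, `n ≥ 1`
(the "past" of the partition given by the fibers of `p`). -/
def partPast (T : X → X) {ι : Type*} (p : X → ι) : MeasurableSpace X :=
  ⨆ n : ℕ, MeasurableSpace.comap (fun x => p (T^[n + 1] x)) ⊤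

/-- The σ-algebra `σ(P^T)` generated by the partitions `T^{-n}P`, `n ∈ ℤ`, where `S = T⁻¹`. -/
def partHull (T S : X → X) {ι : Type*} (p : X → ι) : MeasurableSpace X :=
  ⨆ n : ℕ,
    MeasurableSpace.comap (fun x => p (T^[n] x)) ⊤ ⊔
      MeasurableSpace.comap (fun x => p (S^[n] x)) ⊤

/-- Kolmogorov–Sinai entropy of a finite partition: `h_μ(P, T) = H(P | P^-)`. -/
noncomputable def partKS [MeasurableSpace X] (μ : Measure X) (T : X → X) {ι : Type*}
    [Fintype ι] (p : X → ι) : ℝ :=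
  condPartEntropy μ (partPast T p) p

/-- Kolmogorov–Sinai (measure-theoretic) entropy `h_μ(X, T)` of the system:
the supremum over all finite measurable partitions `P` of `h_μ(P, T)`. -/
noncomputable def ksEntropy [MeasurableSpace X] (μ : Measure X) (T : X → X) : ℝ≥0∞ :=
  ⨆ (k : ℕ) (p : X → Fin k) (_ : Measurable p), ENNReal.ofReal (partKS μ T p)

/-- The Pinsker σ-algebra `Π_μ`: the σ-algebra generated by all finite measurable
partitions with zero Kolmogorov–Sinai entropy. -/
def pinskerAlg [MeasurableSpace X] (μ : Measure X) (T : X → X) : MeasurableSpace X :=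
  ⨆ (k : ℕ) (p : X → Fin k) (_ : Measurable p) (_ : partKS μ T p = 0),
    MeasurableSpace.comap p ⊤

/-- Minimal cardinality of a subcover of `⋁_{i=0}^{n-1} T^{-i} C`, where `C` is a
finite cover of `X`. -/
noncomputable def coverNum (T : X → X) {k : ℕ} (C : Fin k → Set X) (n : ℕ) : ℕ :=
  sInf {m : ℕ | ∃ f : Fin m → Fin n → Fin k,
    (⋃ j : Fin m, ⋂ i : Fin n, T^[(i : ℕ)] ⁻¹' C (f j i)) = Set.univ}

/-- Topological entropy of a finite cover `C`:
`h(C, T) = inf_n (1/n) log N(⋁_{i=0}^{n-1} T^{-i} C) = lim_n (1/n) log N(...)`. -/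
noncomputable def coverEntropyOf (T : X → X) {k : ℕ} (C : Fin k → Set X) : ℝ :=
  ⨅ n : ℕ, Real.log (coverNum T C (n + 1)) / (n + 1)

/-- `(x, y)` is a topological entropy pair: `x ≠ y` and every two-set open cover
`{Uᶜ, Vᶜ}`, where `U` and `V` are disjoint closed neighbourhoods of `x` and `y`,
has positive topological entropy. -/
def IsEntropyPair [TopologicalSpace X] (T : X → X) (x y : X) : Prop :=
  x ≠ y ∧ ∀ U V : Set X, IsClosed U → IsClosed V → U ∈ 𝓝 x → V ∈ 𝓝 y → Disjoint U V →
    0 < coverEntropyOf T ![Uᶜ, Vᶜ]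

/-- `(x, y)` is an entropy pair for the invariant measure `μ`: `x ≠ y` and every two-set
Borel partition `(A, Aᶜ)` with `x ∈ interior A` and `y ∈ interior Aᶜ` has positive
entropy with respect to `T` and `μ`. -/
def IsMuEntropyPair [TopologicalSpace X] [MeasurableSpace X] (T : X → X) (μ : Measure X)
    (x y : X) : Prop :=
  x ≠ y ∧ ∀ A : Set X, MeasurableSet A → x ∈ interior A → y ∈ interior Aᶜ →
    0 < partKS μ T (fun z => if z ∈ A then (0 : Fin 2) else 1)

/-- `ν` is the relatively independent square `μ ⊠_G μ` of `μ` over the sub-σ-algebra `G`: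
it is determined by `ν(A × B) = ∫ E(1_A|G) · E(1_B|G) dμ` for all Borel sets `A`, `B`. -/
def IsCondSquare (G : MeasurableSpace X) [m0 : MeasurableSpace X] (μ : Measure X)
    (ν : Measure (X × X)) : Prop :=
  ∀ A B : Set X, MeasurableSet[m0] A → MeasurableSet[m0] B →
    ν (A ×ˢ B) = ENNReal.ofReal
      (∫ x, (μ[A.indicator (fun _ => (1 : ℝ)) | G]) x *
            (μ[B.indicator (fun _ => (1 : ℝ)) | G]) x ∂μ)

/-- The σ-algebra `m₁` is contained in `m₂` modulo `μ`-null sets. -/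
def SubModNull [MeasurableSpace X] (μ : Measure X) (m₁ m₂ : MeasurableSpace X) : Prop :=
  ∀ A : Set X, MeasurableSet[m₁] A → ∃ B : Set X, MeasurableSet[m₂] B ∧ μ (A ∆ B) = 0

end Defs

section Defs2

variable {X : Type*}

/-- The σ-algebra `F^- = ⋁_{n ≥ 1} T^{-n} F`. -/
def pastAlg (T : X → X) (F : MeasurableSpace X) : MeasurableSpace X :=
  ⨆ n : ℕ, MeasurableSpace.comap (T^[n + 1]) F

/-- The σ-algebra `F^T = ⋁_{n ∈ ℤ} T^{-n} F`, where `S = T⁻¹`. -/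
def hullAlg (T S : X → X) (F : MeasurableSpace X) : MeasurableSpace X :=
  ⨆ n : ℕ, MeasurableSpace.comap (T^[n]) F ⊔ MeasurableSpace.comap (S^[n]) F

/-- `P` is (the σ-algebra of) an *excellent* measurable partition for `(X, μ, T)` (here
`S = T⁻¹`): it is generating (`σ(P^T) = 𝒜` mod `μ`) and it is generated by an increasing
sequence of finite measurable partitions `Pₙ ↑ P` with `H(Pₙ|Pₙ⁻) − H(Pₙ|P⁻) → 0`. -/
def IsExcellentPartition (P : MeasurableSpace X) [m0 : MeasurableSpace X] (μ : Measure X)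
    (T S : X → X) : Prop :=
  P ≤ m0 ∧ SubModNull μ m0 (hullAlg T S P) ∧
  ∃ (m : ℕ → ℕ) (Q : ∀ n : ℕ, X → Fin (m n)),
    (∀ n, Measurable (Q n)) ∧
    Monotone (fun n => MeasurableSpace.comap (Q n) (⊤ : MeasurableSpace (Fin (m n)))) ∧
    (⨆ n : ℕ, MeasurableSpace.comap (Q n) (⊤ : MeasurableSpace (Fin (m n)))) = P ∧
    Tendsto (fun n => condPartEntropy μ (partPast T (Q n)) (Q n) -
      condPartEntropy μ (pastAlg T P) (Q n)) atTop (𝓝 0)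

end Defs2

/-- For a measurable partition `G` of `X`, given as the refinement
`⋁_n G_n` of an increasing sequence of finite Borel partitions (here `g n : X → Fin (m n)`
are the partition maps), the set `Δ_G = {(x,y) : y ∈ G(x)}` is in the product σ-algebra
`B ⊗ B`, and the relatively independent square `μ ⊠_G μ` is concentrated on `Δ_G`. -/
theorem condSquare_concentrated_on_partition_diagonal
    {X : Type*} [MetricSpace X] [CompactSpace X] [m0 : MeasurableSpace X] [BorelSpace X]
    (μ : Measure X) [IsProbabilityMeasure μ]
    (m : ℕ → ℕ) (g : ∀ n : ℕ, X → Fin (m n)) (hmeas : ∀ n, Measurable (g n))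
    (hmono : Monotone (fun n => MeasurableSpace.comap (g n) (⊤ : MeasurableSpace (Fin (m n)))))
    (ν : Measure (X × X))
    (hν : IsCondSquare (⨆ n : ℕ, MeasurableSpace.comap (g n) (⊤ : MeasurableSpace (Fin (m n)))) μ ν) :
    MeasurableSet {p : X × X | ∀ n : ℕ, g n p.2 = g n p.1} ∧
    ν {p : X × X | ∀ n : ℕ, g n p.2 = g n p.1} = 1 := by
  classical
  have hG : (⨆ n : ℕ, MeasurableSpace.comap (g n) (⊤ : MeasurableSpace (Fin (m n)))) ≤ m0 :=
    iSup_le fun n => (hmeas n).comap_le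
  have hA : ∀ n (i : Fin (m n)),
      @MeasurableSet X (⨆ n : ℕ, MeasurableSpace.comap (g n) (⊤ : MeasurableSpace (Fin (m n))))
        ((g n) ⁻¹' {i}) := by
    intro n i
    exact le_iSup (fun n => MeasurableSpace.comap (g n) (⊤ : MeasurableSpace (Fin (m n)))) n
      _ ⟨{i}, trivial, rfl⟩
  have hAm : ∀ n (i : Fin (m n)), MeasurableSet ((g n) ⁻¹' {i}) :=
    fun n i => (hmeas n) (measurableSet_singleton i)
  have hpdisj : ∀ n, Pairwise (Function.onFun Disjoint
      fun i : Fin (m n) => (g n) ⁻¹' {i}) := by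
    intro n i j hij
    refine Set.disjoint_left.2 fun x hx hx' => hij ?_
    simp only [Set.mem_preimage, Set.mem_singleton_iff] at hx hx'
    exact hx.symm.trans hx'
  have hcond : ∀ n (i : Fin (m n)),
      μ[((g n) ⁻¹' {i}).indicator (fun _ => (1:ℝ)) |
        ⨆ n : ℕ, MeasurableSpace.comap (g n) (⊤ : MeasurableSpace (Fin (m n)))]
      = ((g n) ⁻¹' {i}).indicator (fun _ => (1:ℝ)) := by
    intro n i
    refine condExp_of_stronglyMeasurable hG ?_ ?_
    · exact stronglyMeasurable_const.indicator (hA n i)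
    · exact (integrable_const (1:ℝ)).indicator (hAm n i)
  have hAB : ∀ n (i : Fin (m n)), ν (((g n) ⁻¹' {i}) ×ˢ ((g n) ⁻¹' {i}))
      = μ ((g n) ⁻¹' {i}) := by
    intro n i
    rw [hν _ _ (hAm n i) (hAm n i), hcond]
    have hsq : ∀ x, ((g n ⁻¹' {i}).indicator (fun _ => (1:ℝ)) x) *
        ((g n ⁻¹' {i}).indicator (fun _ => (1:ℝ)) x)
        = (g n ⁻¹' {i}).indicator (fun _ => (1:ℝ)) x := by
      intro x
      by_cases h : x ∈ g n ⁻¹' {i} <;> simp [Set.indicator_apply, h]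
    simp_rw [hsq]
    rw [integral_indicator (hAm n i)]
    simp [ENNReal.ofReal_toReal (measure_ne_top μ _)]
  have hsum1 : ∀ n, ∑ i : Fin (m n), μ ((g n) ⁻¹' {i}) = 1 := by
    intro n
    have huniv : (⋃ i : Fin (m n), (g n) ⁻¹' {i}) = Set.univ := by
      ext x; simp
    rw [← tsum_fintype (L := SummationFilter.unconditional _), ← measure_iUnion (hpdisj n) (hAm n), huniv, measure_univ]
  set D : ℕ → Set (X × X) := fun n => ⋃ i : Fin (m n), ((g n) ⁻¹' {i}) ×ˢ ((g n) ⁻¹' {i})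
    with hDdef
  have hDm : ∀ n, MeasurableSet (D n) := fun n =>
    MeasurableSet.iUnion fun i => (hAm n i).prod (hAm n i)
  have hDeq : {p : X × X | ∀ n : ℕ, g n p.2 = g n p.1} = ⋂ n, D n := by
    ext p
    simp only [Set.mem_setOf_eq, Set.mem_iInter, hDdef, Set.mem_iUnion, Set.mem_prod,
      Set.mem_preimage, Set.mem_singleton_iff]
    constructor
    · intro h n; exact ⟨g n p.1, rfl, h n⟩
    · intro h n; obtain ⟨i, h1, h2⟩ := h n; rw [h1, h2]
  have hνD : ∀ n, ν (D n) = 1 := by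
    intro n
    have hdisj : Pairwise (Function.onFun Disjoint
        fun i : Fin (m n) => ((g n) ⁻¹' {i}) ×ˢ ((g n) ⁻¹' {i})) := by
      intro i j hij
      exact Disjoint.mono (Set.prod_subset_preimage_fst _ _)
        (Set.prod_subset_preimage_fst _ _) ((hpdisj n hij).preimage Prod.fst)
    show ν (⋃ i : Fin (m n), ((g n) ⁻¹' {i}) ×ˢ ((g n) ⁻¹' {i})) = 1
    rw [measure_iUnion hdisj fun i => (hAm n i).prod (hAm n i), tsum_fintype]
    simp_rw [hAB]
    exact hsum1 n
  have hνuniv : ν Set.univ = 1 := by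
    have h := hν Set.univ Set.univ MeasurableSet.univ MeasurableSet.univ
    rw [Set.univ_prod_univ] at h
    rw [h]
    have h1 : μ[Set.univ.indicator (fun _ : X => (1:ℝ)) |
        ⨆ n : ℕ, MeasurableSpace.comap (g n) (⊤ : MeasurableSpace (Fin (m n)))]
        = fun _ => (1:ℝ) := by
      rw [Set.indicator_univ]
      exact condExp_const hG 1
    rw [h1]
    simp
  have hcompl : ν ({p : X × X | ∀ n : ℕ, g n p.2 = g n p.1})ᶜ = 0 := by
    rw [hDeq, Set.compl_iInter]
    refine le_antisymm (le_trans (measure_iUnion_le _) ?_) zero_le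
    have hz : ∀ n, ν (D n)ᶜ = 0 := by
      intro n
      rw [measure_compl (hDm n) (by rw [hνD n]; exact ENNReal.one_ne_top), hνuniv, hνD n, tsub_self]
    simp [hz]
  have hmeasΔ : MeasurableSet {p : X × X | ∀ n : ℕ, g n p.2 = g n p.1} := by
    rw [hDeq]; exact MeasurableSet.iInter hDm
  refine ⟨hmeasΔ, ?_⟩
  have h2 : ν {p : X × X | ∀ n : ℕ, g n p.2 = g n p.1} =
      ν Set.univ - ν ({p : X × X | ∀ n : ℕ, g n p.2 = g n p.1})ᶜ := by
    rw [← measure_compl hmeasΔ.compl (by rw [hcompl]; exact ENNReal.zero_ne_top), compl_compl]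
  rw [h2, hcompl, hνuniv, tsub_zero]
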